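/- (Opial's Lemma) Let H be a real Hilbert space, U a nonempty subset of H, and (uⁿ) a sequence in H such that for every u ∈ U the real sequence (‖uⁿ − u‖) converges. If every subsequence of (uⁿ) that converges weakly has its weak limit in U, then (uⁿ) converges weakly to an element of U. -/

import Mathlib

open RealInnerProductSpace Filter Topology

/-- Sequential weak compactness of bounded sequences in a real Hilbert space. -/
lemma weak_seq_compact
    {H : Type*} [NormedAddCommGroup H] [InnerProductSpace ℝ H] [CompleteSpace H]
    (C : ℝ) (w : ℕ → H) (hb : ∀ n, ‖w n‖ ≤ C) :
    ∃ x : H, ∃ φ : ℕ → ℕ, StrictMono φ ∧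
      ∀ v : H, Tendsto (fun n => ⟪w (φ n), v⟫) atTop (nhds ⟪x, v⟫) := by
  have hC : 0 ≤ C := le_trans (norm_nonneg _) (hb 0)
  -- diagonal extraction via compactness of [-C²,C²]^ℕ
  have hib : ∀ n m, (fun n m => ⟪w n, w m⟫ : ℕ → ℕ → ℝ) n m ∈ Set.Icc (-(C*C)) (C*C) := by
    intro n m
    have := abs_real_inner_le_norm (w n) (w m)
    have h2 : ‖w n‖ * ‖w m‖ ≤ C * C :=
      mul_le_mul (hb n) (hb m) (norm_nonneg _) hC
    constructor
    · nlinarith [abs_nonneg (⟪w n, w m⟫), neg_abs_le (⟪w n, w m⟫ : ℝ)]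
    · nlinarith [le_abs_self (⟪w n, w m⟫ : ℝ)]
  obtain ⟨a, -, φ, hφ, ha⟩ :=
    (isCompact_univ_pi (fun _ : ℕ => isCompact_Icc (a := -(C*C)) (b := C*C))).tendsto_subseq
      (x := fun n m => ⟪w n, w m⟫) (fun n => Set.mem_univ_pi.2 (hib n))
  rw [tendsto_pi_nhds] at ha
  -- set up the closed span
  set V := (Submodule.span ℝ (Set.range w)).topologicalClosure with hV
  have hwV : ∀ n, w n ∈ V :=
    fun n => Submodule.le_topologicalClosure _ (Submodule.subset_span ⟨n, rfl⟩)
  -- convergence on the span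
  have hspan : ∀ v ∈ Submodule.span ℝ (Set.range w),
      ∃ l : ℝ, Tendsto (fun n => ⟪w (φ n), v⟫) atTop (nhds l) := by
    intro v hv
    induction hv using Submodule.span_induction with
    | mem x hx =>
        obtain ⟨m, rfl⟩ := hx
        exact ⟨a m, ha m⟩
    | zero => exact ⟨0, by simpa using tendsto_const_nhds⟩
    | add x y _ _ hx hy =>
        obtain ⟨lx, hlx⟩ := hx; obtain ⟨ly, hly⟩ := hy
        exact ⟨lx + ly, by simpa [inner_add_right] using hlx.add hly⟩
    | smul c x _ hx =>
        obtain ⟨lx, hlx⟩ := hx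
        exact ⟨c * lx, by simpa [real_inner_smul_right] using hlx.const_mul c⟩
  -- convergence on the closure
  have hclos : ∀ v ∈ V, ∃ l : ℝ, Tendsto (fun n => ⟪w (φ n), v⟫) atTop (nhds l) := by
    intro v hv
    have hcau : CauchySeq (fun n => ⟪w (φ n), v⟫) := by
      rw [Metric.cauchySeq_iff]
      intro ε hε
      have hv' : v ∈ closure ((Submodule.span ℝ (Set.range w) : Submodule ℝ H) : Set H) := hv
      have hδ : (0:ℝ) < ε / (3 * (C + 1)) := by positivity
      obtain ⟨z, hz, hzd⟩ := Metric.mem_closure_iff.1 hv' _ hδ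
      obtain ⟨l, hl⟩ := hspan z hz
      have hcz : CauchySeq (fun n => ⟪w (φ n), z⟫) := hl.cauchySeq
      rw [Metric.cauchySeq_iff] at hcz
      obtain ⟨N, hN⟩ := hcz (ε/3) (by linarith)
      refine ⟨N, fun m hm n hn => ?_⟩
      have key : ∀ k, |⟪w (φ k), v⟫ - ⟪w (φ k), z⟫| ≤ C * (ε / (3 * (C + 1))) := by
        intro k
        have : ⟪w (φ k), v⟫ - ⟪w (φ k), z⟫ = ⟪w (φ k), v - z⟫ := by
          rw [inner_sub_right]
        rw [this]
        calc |⟪w (φ k), v - z⟫| ≤ ‖w (φ k)‖ * ‖v - z‖ := abs_real_inner_le_norm _ _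
          _ ≤ C * (ε / (3 * (C + 1))) := by
              apply mul_le_mul (hb _) _ (norm_nonneg _) hC
              rw [← dist_eq_norm]
              exact le_of_lt hzd
      have hCe : C * (ε / (3 * (C + 1))) < ε / 3 := by
        have h0 : C * (ε / (3 * (C + 1))) = C * ε / (3 * (C + 1)) := by ring
        rw [h0, div_lt_div_iff₀ (by positivity) (by norm_num : (0:ℝ) < 3)]
        nlinarith
      have h1 := key m
      have h2 := key n
      have h3 := hN m hm n hn
      rw [Real.dist_eq] at h3 ⊢
      have := abs_sub_abs_le_abs_sub (⟪w (φ m), v⟫ - ⟪w (φ n), v⟫)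
        ((⟪w (φ m), v⟫ - ⟪w (φ m), z⟫) - (⟪w (φ n), v⟫ - ⟪w (φ n), z⟫))
      calc |⟪w (φ m), v⟫ - ⟪w (φ n), v⟫|
          ≤ |⟪w (φ m), v⟫ - ⟪w (φ m), z⟫| + |⟪w (φ m), z⟫ - ⟪w (φ n), z⟫|
            + |⟪w (φ n), z⟫ - ⟪w (φ n), v⟫| := by
            have := abs_sub_le (⟪w (φ m), v⟫) (⟪w (φ m), z⟫) (⟪w (φ n), v⟫)
            have := abs_sub_le (⟪w (φ m), z⟫) (⟪w (φ n), z⟫) (⟪w (φ n), v⟫)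
            linarith [abs_sub_le (⟪w (φ m), v⟫ : ℝ) (⟪w (φ m), z⟫) (⟪w (φ n), v⟫),
              abs_sub_le (⟪w (φ m), z⟫ : ℝ) (⟪w (φ n), z⟫) (⟪w (φ n), v⟫)]
        _ < ε := by
            rw [abs_sub_comm (⟪w (φ n), z⟫ : ℝ)] at *
            linarith
    exact cauchySeq_tendsto_of_complete hcau
  -- convergence for every v via orthogonal projection
  have hall : ∀ v : H, ∃ l : ℝ, Tendsto (fun n => ⟪w (φ n), v⟫) atTop (nhds l) := by
    intro v
    have hP : (Submodule.orthogonalProjection V v : H) ∈ V := (Submodule.orthogonalProjection V v).2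
    obtain ⟨l, hl⟩ := hclos _ hP
    refine ⟨l, ?_⟩
    have heq : ∀ n, ⟪w (φ n), v⟫ = ⟪w (φ n), (Submodule.orthogonalProjection V v : H)⟫ := by
      intro n
      have horth : v - (Submodule.orthogonalProjection V v : H) ∈ Vᗮ :=
        Submodule.sub_starProjection_mem_orthogonal (K := V) v
      have hz : ⟪w (φ n), v - (Submodule.orthogonalProjection V v : H)⟫ = 0 :=
        Submodule.inner_right_of_mem_orthogonal (hwV _) horth
      have := inner_sub_right (𝕜 := ℝ) (w (φ n)) v (Submodule.orthogonalProjection V v : H)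
      linarith [hz, this]
    simpa only [heq] using hl
  choose L hL using hall
  -- build the dual element
  have hLadd : ∀ v₁ v₂, L (v₁ + v₂) = L v₁ + L v₂ := by
    intro v₁ v₂
    refine tendsto_nhds_unique (hL (v₁ + v₂)) ?_
    simpa [inner_add_right] using (hL v₁).add (hL v₂)
  have hLsmul : ∀ (c : ℝ) v, L (c • v) = c * L v := by
    intro c v
    refine tendsto_nhds_unique (hL (c • v)) ?_
    simpa [real_inner_smul_right] using (hL v).const_mul c
  have hLbound : ∀ v, ‖L v‖ ≤ C * ‖v‖ := by
    intro v
    rw [Real.norm_eq_abs]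
    have : Tendsto (fun n => |⟪w (φ n), v⟫|) atTop (nhds |L v|) := (hL v).abs
    refine le_of_tendsto this (Eventually.of_forall fun n => ?_)
    calc |⟪w (φ n), v⟫| ≤ ‖w (φ n)‖ * ‖v‖ := abs_real_inner_le_norm _ _
      _ ≤ C * ‖v‖ := mul_le_mul_of_nonneg_right (hb _) (norm_nonneg _)
  let f : H →L[ℝ] ℝ := LinearMap.mkContinuous
    { toFun := L, map_add' := hLadd, map_smul' := hLsmul } C hLbound
  refine ⟨(InnerProductSpace.toDual ℝ H).symm f, φ, hφ, fun v => ?_⟩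
  have : ⟪(InnerProductSpace.toDual ℝ H).symm f, v⟫ = f v :=
    InnerProductSpace.toDual_symm_apply
  rw [this]
  exact hL v


/-- Opial's Lemma: if ‖uⁿ − u‖ converges for every u ∈ U and every
weakly convergent subsequence of (uⁿ) has its weak limit in U, then (uⁿ) converges
weakly to an element of U. -/
theorem opial_lemma
    {H : Type*} [NormedAddCommGroup H] [InnerProductSpace ℝ H] [CompleteSpace H]
    (U : Set H) (hU : U.Nonempty) (u : ℕ → H)
    (hconv : ∀ x ∈ U, ∃ l : ℝ, Tendsto (fun n => ‖u n - x‖) atTop (nhds l))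
    (hweak : ∀ k : ℕ → ℕ, StrictMono k → ∀ x : H,
      (∀ v : H, Tendsto (fun n => ⟪u (k n), v⟫) atTop (nhds ⟪x, v⟫)) → x ∈ U) :
    ∃ x ∈ U, ∀ v : H, Tendsto (fun n => ⟪u n, v⟫) atTop (nhds ⟪x, v⟫) := by
  obtain ⟨x₀, hx₀⟩ := hU
  -- the sequence is bounded
  obtain ⟨l₀, hl₀⟩ := hconv x₀ hx₀
  obtain ⟨B, hB⟩ := hl₀.bddAbove_range
  set C : ℝ := B + ‖x₀‖ with hCdef
  have hb : ∀ n, ‖u n‖ ≤ C := by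
    intro n
    have h1 : ‖u n - x₀‖ ≤ B := hB ⟨n, rfl⟩
    have := norm_sub_norm_le (u n) x₀
    linarith [norm_sub_norm_le (u n) x₀]
  -- key: for x, y ∈ U, ⟪u n, x - y⟫ converges
  have hkey : ∀ x ∈ U, ∀ y ∈ U, ∃ l : ℝ,
      Tendsto (fun n => ⟪u n, x - y⟫) atTop (nhds l) := by
    intro x hx y hy
    obtain ⟨l₁, hl₁⟩ := hconv x hx
    obtain ⟨l₂, hl₂⟩ := hconv y hy
    refine ⟨(‖x‖^2 - ‖y‖^2 - (l₁^2 - l₂^2)) / 2, ?_⟩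
    have hsq : Tendsto (fun n => ‖u n - x‖^2 - ‖u n - y‖^2) atTop
        (nhds (l₁^2 - l₂^2)) := ((hl₁.pow 2).sub (hl₂.pow 2))
    have heq : ∀ n, ⟪u n, x - y⟫ =
        (‖x‖^2 - ‖y‖^2 - (‖u n - x‖^2 - ‖u n - y‖^2)) / 2 := by
      intro n
      have h1 : ‖u n - x‖^2 = ‖u n‖^2 - 2 * ⟪u n, x⟫ + ‖x‖^2 := by
        rw [← real_inner_self_eq_norm_sq, ← real_inner_self_eq_norm_sq,
          ← real_inner_self_eq_norm_sq]
        simp [inner_sub_left, inner_sub_right, real_inner_comm]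
        linarith [norm_sub_sq_real (u n) x, real_inner_comm x (u n)]
      have h2 : ‖u n - y‖^2 = ‖u n‖^2 - 2 * ⟪u n, y⟫ + ‖y‖^2 := by
        rw [← real_inner_self_eq_norm_sq, ← real_inner_self_eq_norm_sq,
          ← real_inner_self_eq_norm_sq]
        simp [inner_sub_left, inner_sub_right, real_inner_comm]
        linarith [norm_sub_sq_real (u n) y, real_inner_comm y (u n)]
      rw [inner_sub_right, h1, h2]
      ring
    simp only [heq]
    have := (tendsto_const_nhds (x := (‖x‖^2 - ‖y‖^2 : ℝ)) (f := atTop (α := ℕ))).sub hsq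
    exact this.div_const 2
  -- extract a weakly convergent subsequence
  obtain ⟨x, φ, hφ, hxw⟩ := weak_seq_compact C u hb
  have hxU : x ∈ U := hweak φ hφ x hxw
  refine ⟨x, hxU, fun v => ?_⟩
  -- show the whole sequence converges weakly to x
  apply tendsto_of_subseq_tendsto
  intro ns hns
  obtain ⟨ψ, hψ, hnsψ⟩ := strictMono_subseq_of_tendsto_atTop hns
  obtain ⟨y, σ, hσ, hyw⟩ := weak_seq_compact C (fun n => u (ns (ψ n)))
    (fun n => hb _)
  have hcomp : StrictMono (fun n => ns (ψ (σ n))) := fun a b hab => hnsψ (hσ hab)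
  have hyw' : ∀ v : H, Tendsto (fun n => ⟪u (ns (ψ (σ n))), v⟫) atTop (nhds ⟪y, v⟫) := hyw
  have hyU : y ∈ U := hweak _ hcomp y hyw'
  -- y = x
  have hxy : x = y := by
    obtain ⟨l, hl⟩ := hkey x hxU y hyU
    have h1 : Tendsto (fun n => ⟪u (φ n), x - y⟫) atTop (nhds l) :=
      hl.comp hφ.tendsto_atTop
    have h2 : Tendsto (fun n => ⟪u (ns (ψ (σ n))), x - y⟫) atTop (nhds l) :=
      hl.comp hcomp.tendsto_atTop
    have hx1 : l = ⟪x, x - y⟫ := tendsto_nhds_unique h1 (hxw (x - y))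
    have hy1 : l = ⟪y, x - y⟫ := tendsto_nhds_unique h2 (hyw' (x - y))
    have : ⟪x - y, x - y⟫ = (0:ℝ) := by
      rw [inner_sub_left]
      linarith [hx1, hy1]
    have := inner_self_eq_zero (𝕜 := ℝ).1 this
    exact sub_eq_zero.1 this
  refine ⟨fun n => ψ (σ n), ?_⟩
  rw [hxy]
  exact hyw' v
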